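/- The p-part simplex S^p with perturbation x ⊕ y = (x_1y_1,…,x_py_p)/Σ_i x_iy_i, powering α ⊙ x = (x_1^α,…,x_p^α)/Σ_i x_i^α, and the Aitchison inner product ⟨x,y⟩_A = (1/(2p)) Σ_{k,l=1}^p ln(x_k/x_l)ln(y_k/y_l) forms a real inner product space of dimension p−1. -/

import Mathlib

open scoped RealInnerProductSpace

/-- The open `p`-part simplex of strictly positive compositions summing to 1. -/
def simplexSet (p : ℕ) : Set (Fin p → ℝ) :=
  {x | (∀ k, 0 < x k) ∧ ∑ k, x k = 1}

/-- Aitchison perturbation `x ⊕ y`. -/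
noncomputable def pert {p : ℕ} (x y : Fin p → ℝ) : Fin p → ℝ :=
  fun k => x k * y k / ∑ i, x i * y i

/-- Aitchison powering `α ⊙ x`. -/
noncomputable def apow {p : ℕ} (α : ℝ) (x : Fin p → ℝ) : Fin p → ℝ :=
  fun k => x k ^ α / ∑ i, x i ^ α

/-- The Aitchison inner product `⟨x, y⟩_A = (1/(2p)) ∑_{k,l} ln(x_k/x_l) ln(y_k/y_l)`. -/
noncomputable def aInner {p : ℕ} (x y : Fin p → ℝ) : ℝ :=
  (1 / (2 * (p : ℝ))) * ∑ k, ∑ l, Real.log (x k / x l) * Real.log (y k / y l)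

/-- the simplex `S^p` with perturbation, powering and the Aitchison
inner product forms a real inner product space of dimension `p − 1`: there is a
bijection onto the `(p−1)`-dimensional Euclidean space turning perturbation into
addition, powering into scalar multiplication, and `⟨·,·⟩_A` into the Euclidean
inner product. -/

noncomputable def clr {p : ℕ} (x : Fin p → ℝ) : EuclideanSpace ℝ (Fin p) :=
  WithLp.toLp 2 (fun k => Real.log (x k) - (∑ i, Real.log (x i)) / p)

lemma clr_sum {p : ℕ} (hp : 0 < p) (x : Fin p → ℝ) : ∑ k, clr x k = 0 := by
  have hp' : (p : ℝ) ≠ 0 := Nat.cast_ne_zero.mpr hp.ne'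
  simp [clr, Finset.sum_sub_distrib, Finset.card_univ]
  field_simp
  ring

lemma clr_scale {p : ℕ} {x w : Fin p → ℝ} {c : ℝ} (hc : 0 < c) (hw : ∀ k, 0 < w k)
    (h : ∀ k, x k = c * w k) : clr x = clr w := by
  ext k
  have hl : ∀ i, Real.log (x i) = Real.log c + Real.log (w i) := fun i => by
    rw [h i, Real.log_mul hc.ne' (hw i).ne']
  simp only [clr, PiLp.toLp_apply, hl, Finset.sum_add_distrib, Finset.sum_const, Finset.card_univ,
    Fintype.card_fin, nsmul_eq_mul]
  by_cases hp : (p : ℝ) = 0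
  · exact absurd k.isLt (by simp [Nat.cast_eq_zero.mp hp])
  · field_simp
    ring

noncomputable def smax {p : ℕ} (v : Fin p → ℝ) : Fin p → ℝ :=
  fun k => Real.exp (v k) / ∑ i, Real.exp (v i)

lemma smax_sum_pos {p : ℕ} (hp : 0 < p) (v : Fin p → ℝ) : 0 < ∑ i, Real.exp (v i) :=
  Finset.sum_pos (fun i _ => Real.exp_pos _) (Finset.univ_nonempty_iff.mpr ⟨⟨0, hp⟩⟩)


lemma smax_mem {p : ℕ} (hp : 0 < p) (v : Fin p → ℝ) : smax v ∈ simplexSet p := by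
  have hs := smax_sum_pos hp v
  constructor
  · intro k; exact div_pos (Real.exp_pos _) hs
  · simp only [smax, ← Finset.sum_div]
    field_simp

lemma clr_smax {p : ℕ} (hp : 0 < p) (v : Fin p → ℝ) (hv : ∑ k, v k = 0) :
    clr (smax v) = v := by
  have hs := smax_sum_pos hp v
  have h1 : clr (smax v) = clr (fun k => Real.exp (v k)) := by
    refine clr_scale (c := (∑ i, Real.exp (v i))⁻¹) (inv_pos.mpr hs)
      (fun k => Real.exp_pos _) (fun k => ?_)
    simp [smax, div_eq_inv_mul]
  rw [h1]
  funext k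
  simp [clr, Real.log_exp, hv]

lemma smax_clr {p : ℕ} (x : Fin p → ℝ) (hx : x ∈ simplexSet p) : smax (clr x) = x := by
  obtain ⟨hpos, hsum⟩ := hx
  have he : ∀ k, Real.exp (clr x k) = x k * Real.exp (-((∑ i, Real.log (x i)) / p)) := by
    intro k
    rw [clr, PiLp.toLp_apply]
    rw [sub_eq_add_neg, Real.exp_add, Real.exp_log (hpos k)]
  funext k
  have hc : (0:ℝ) < Real.exp (-((∑ i, Real.log (x i)) / p)) := Real.exp_pos _
  simp only [smax, he, ← Finset.sum_mul, hsum, one_mul]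
  field_simp

lemma clr_mul {p : ℕ} {x y : Fin p → ℝ} (hx : ∀ k, 0 < x k) (hy : ∀ k, 0 < y k) :
    clr (fun k => x k * y k) = clr x + clr y := by
  ext k
  have hl : ∀ i, Real.log (x i * y i) = Real.log (x i) + Real.log (y i) := fun i =>
    Real.log_mul (hx i).ne' (hy i).ne'
  simp only [clr, PiLp.toLp_apply, hl, Finset.sum_add_distrib, PiLp.add_apply]
  ring

lemma clr_rpow {p : ℕ} {x : Fin p → ℝ} (hx : ∀ k, 0 < x k) (α : ℝ) :
    clr (fun k => x k ^ α) = α • clr x := by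
  ext k
  have hl : ∀ i, Real.log (x i ^ α) = α * Real.log (x i) := fun i =>
    Real.log_rpow (hx i) α
  simp only [clr, PiLp.toLp_apply, hl, ← Finset.mul_sum, PiLp.smul_apply, smul_eq_mul]
  ring

lemma clr_pert {p : ℕ} {x y : Fin p → ℝ} (hp : 0 < p) (hx : x ∈ simplexSet p)
    (hy : y ∈ simplexSet p) :
    clr (fun k => x k * y k / ∑ i, x i * y i) = clr x + clr y := by
  have hs : 0 < ∑ i, x i * y i :=
    Finset.sum_pos (fun i _ => mul_pos (hx.1 i) (hy.1 i)) (Finset.univ_nonempty_iff.mpr ⟨⟨0, hp⟩⟩)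
  rw [← clr_mul hx.1 hy.1]
  exact clr_scale (inv_pos.mpr hs) (fun k => mul_pos (hx.1 k) (hy.1 k))
    (fun k => by simp [div_eq_inv_mul])

lemma clr_apow {p : ℕ} {x : Fin p → ℝ} (hp : 0 < p) (hx : x ∈ simplexSet p) (α : ℝ) :
    clr (fun k => x k ^ α / ∑ i, x i ^ α) = α • clr x := by
  have hs : 0 < ∑ i, x i ^ α :=
    Finset.sum_pos (fun i _ => Real.rpow_pos_of_pos (hx.1 i) α)
      (Finset.univ_nonempty_iff.mpr ⟨⟨0, hp⟩⟩)
  rw [← clr_rpow hx.1 α]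
  exact clr_scale (inv_pos.mpr hs) (fun k => Real.rpow_pos_of_pos (hx.1 k) α)
    (fun k => by simp [div_eq_inv_mul])


lemma aInner_eq {p : ℕ} (hp : 0 < p) {x y : Fin p → ℝ} (hx : ∀ k, 0 < x k)
    (hy : ∀ k, 0 < y k) : aInner x y = ∑ k, clr x k * clr y k := by
  have hp' : (p : ℝ) ≠ 0 := Nat.cast_ne_zero.mpr hp.ne'
  set a : Fin p → ℝ := fun k => Real.log (x k) with ha
  set b : Fin p → ℝ := fun k => Real.log (y k) with hb
  have hld : ∀ k l, Real.log (x k / x l) = a k - a l := fun k l =>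
    Real.log_div (hx k).ne' (hx l).ne'
  have hld' : ∀ k l, Real.log (y k / y l) = b k - b l := fun k l =>
    Real.log_div (hy k).ne' (hy l).ne'
  have h1 : ∀ k, ∑ l, (a k - a l) * (b k - b l)
      = (p : ℝ) * (a k * b k) - a k * (∑ l, b l) - b k * (∑ l, a l) + ∑ l, a l * b l := by
    intro k
    have : ∀ l, (a k - a l) * (b k - b l)
        = (a k * b k - a k * b l) - (b k * a l - a l * b l) := fun l => by ring
    simp only [this, Finset.sum_sub_distrib, ← Finset.mul_sum, Finset.sum_const,
      Finset.card_univ, Fintype.card_fin, nsmul_eq_mul]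
    ring
  have h2 : ∑ k, ∑ l, (a k - a l) * (b k - b l)
      = 2 * (p : ℝ) * (∑ k, a k * b k) - 2 * (∑ k, a k) * (∑ k, b k) := by
    simp only [h1, Finset.sum_add_distrib, Finset.sum_sub_distrib, ← Finset.sum_mul,
      Finset.sum_const, Finset.card_univ, Fintype.card_fin, nsmul_eq_mul, ← Finset.mul_sum]
    ring
  have h3 : ∀ k, clr x k * clr y k
      = (a k - (∑ i, a i) / p) * (b k - (∑ i, b i) / p) := fun k => rfl
  rw [aInner]
  simp only [hld, hld', h2, h3]
  have h4 : ∑ k, (a k - (∑ i, a i) / p) * (b k - (∑ i, b i) / p)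
      = (∑ k, a k * b k) - (∑ k, a k) * (∑ k, b k) / p := by
    have : ∀ k, (a k - (∑ i, a i) / p) * (b k - (∑ i, b i) / p)
        = a k * b k - a k * ((∑ i, b i) / p) - b k * ((∑ i, a i) / p)
          + ((∑ i, a i) / p) * ((∑ i, b i) / p) := fun k => by ring
    simp only [this, Finset.sum_add_distrib, Finset.sum_sub_distrib, ← Finset.sum_mul,
      Finset.sum_const, Finset.card_univ, Fintype.card_fin, nsmul_eq_mul]
    field_simp
    ring
  rw [h4]
  field_simp



noncomputable def sumLM (p : ℕ) : EuclideanSpace ℝ (Fin p) →ₗ[ℝ] ℝ where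
  toFun v := ∑ k, v k
  map_add' u v := by simp [Finset.sum_add_distrib]
  map_smul' c v := by simp [Finset.mul_sum]



theorem simplex_aitchison_innerProductSpace (p : ℕ) (hp : 0 < p) :
    ∃ e : {x : Fin p → ℝ // x ∈ simplexSet p} ≃ EuclideanSpace ℝ (Fin (p - 1)),
      (∀ x y z : {x : Fin p → ℝ // x ∈ simplexSet p},
          (z : Fin p → ℝ) = pert (x : Fin p → ℝ) (y : Fin p → ℝ) → e z = e x + e y) ∧
      (∀ (α : ℝ) (x z : {x : Fin p → ℝ // x ∈ simplexSet p}),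
          (z : Fin p → ℝ) = apow α (x : Fin p → ℝ) → e z = α • e x) ∧
      (∀ x y : {x : Fin p → ℝ // x ∈ simplexSet p},
          aInner (x : Fin p → ℝ) (y : Fin p → ℝ) = ⟪e x, e y⟫) := by
  classical
  have hp' : (p : ℝ) ≠ 0 := Nat.cast_ne_zero.mpr hp.ne'
  set V : Submodule ℝ (EuclideanSpace ℝ (Fin p)) := LinearMap.ker (sumLM p) with hV
  have hsurj : Function.Surjective (sumLM p) := by
    intro c
    refine ⟨WithLp.toLp 2 (fun _ => c / p), ?_⟩
    show ∑ _k : Fin p, c / (p:ℝ) = c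
    rw [Finset.sum_const, Finset.card_univ, Fintype.card_fin, nsmul_eq_mul]
    field_simp
  have hrank : Module.finrank ℝ V = p - 1 := by
    have h1 := LinearMap.finrank_range_add_finrank_ker (sumLM p)
    rw [LinearMap.range_eq_top.mpr hsurj, finrank_top, finrank_euclideanSpace_fin] at h1
    have h2 : Module.finrank ℝ ℝ = 1 := Module.finrank_self ℝ
    rw [h2] at h1
    rw [hV]
    omega
  let iso2 : V ≃ₗᵢ[ℝ] EuclideanSpace ℝ (Fin (p - 1)) :=
    ((stdOrthonormalBasis ℝ V).reindex (finCongr hrank)).repr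
  have memV : ∀ x : {x : Fin p → ℝ // x ∈ simplexSet p}, clr (x : Fin p → ℝ) ∈ V := by
    intro x
    show clr (x : Fin p → ℝ) ∈ LinearMap.ker (sumLM p)
    rw [LinearMap.mem_ker]
    exact clr_sum hp _
  let clrV : {x : Fin p → ℝ // x ∈ simplexSet p} → V := fun x => ⟨clr (x : Fin p → ℝ), memV x⟩
  refine ⟨⟨fun x => iso2 (clrV x),
    fun v => ⟨smax ((iso2.symm v : V) : EuclideanSpace ℝ (Fin p)), smax_mem hp _⟩, ?_, ?_⟩,
    ?_, ?_, ?_⟩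
  · intro x
    apply Subtype.ext
    show smax ((iso2.symm (iso2 (clrV x)) : V) : EuclideanSpace ℝ (Fin p)) = (x : Fin p → ℝ)
    rw [iso2.symm_apply_apply]
    exact smax_clr _ x.2
  · intro v
    have hsum : ∑ k, ((iso2.symm v : V) : EuclideanSpace ℝ (Fin p)) k = 0 :=
      (LinearMap.mem_ker.mp (iso2.symm v).2)
    show iso2 (clrV _) = v
    have : clrV ⟨smax ((iso2.symm v : V) : EuclideanSpace ℝ (Fin p)), smax_mem hp _⟩
        = iso2.symm v := by
      apply Subtype.ext
      exact WithLp.ofLp_injective 2 (clr_smax hp _ hsum)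
    rw [this, iso2.apply_symm_apply]
  · intro x y z hz
    show iso2 (clrV z) = iso2 (clrV x) + iso2 (clrV y)
    rw [← iso2.map_add]
    congr 1
    apply Subtype.ext
    show clr (z : Fin p → ℝ) = clr (x : Fin p → ℝ) + clr (y : Fin p → ℝ)
    rw [hz]
    exact clr_pert hp x.2 y.2
  · intro α x z hz
    show iso2 (clrV z) = α • iso2 (clrV x)
    rw [← iso2.map_smul]
    congr 1
    apply Subtype.ext
    show clr (z : Fin p → ℝ) = α • clr (x : Fin p → ℝ)
    rw [hz]
    exact clr_apow hp x.2 α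
  · intro x y
    show aInner (x : Fin p → ℝ) (y : Fin p → ℝ) = ⟪iso2 (clrV x), iso2 (clrV y)⟫
    rw [iso2.inner_map_map]
    rw [aInner_eq hp x.2.1 y.2.1]
    rw [Submodule.coe_inner]
    simp [PiLp.inner_apply, RCLike.inner_apply, clrV, mul_comm]
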